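/- Let (X₀,X₁) and (Y₀,Y₁) be couples of quasi-Banach spaces continuously embedded in Hausdorff topological vector spaces, Θ ∈ (0,1), and let T be linear and bounded from A₀ to B₀ and from A₁ to B₁. Then T maps the Gustavsson–Peetre space ⟨A₀, A₁, Θ⟩ continuously into ⟨B₀, B₁, Θ⟩ with operator quasi-norm at most max{‖T‖_{A₀→B₀}, ‖T‖_{A₁→B₁}}. -/

import Mathlib

open Filter
open scoped ENNReal Topology

section GustavssonPeetre

variable {E : Type*} [AddCommGroup E] [Module ℂ E]

/-- The quasi-norm of the sum space `X₀ + X₁`: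
`‖x‖ = inf { ‖x₀‖_{X₀} + ‖x₁‖_{X₁} : x = x₀ + x₁ }`. -/
noncomputable def sumQuasiNorm (N₀ N₁ : E → ℝ≥0∞) (x : E) : ℝ≥0∞ :=
  ⨅ y : E, N₀ y + N₁ (x - y)

/-- The weighted finite partial sums `Σ_{i ∈ F} ε_i 2^{i(j-Θ)} a_i` occurring in
the Gustavsson–Peetre `±`-method. -/
noncomputable def gpSum (Θ : ℝ) (j : ℕ) (ε : ℤ → ℂ) (s : ℤ → E)
    (F : Finset ℤ) : E :=
  ∑ i ∈ F, (ε i * (((2 : ℝ) ^ ((i : ℝ) * ((j : ℝ) - Θ)) : ℝ) : ℂ)) • s i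

/-- `a` belongs to the Gustavsson–Peetre space `⟨X₀, X₁, Θ⟩` with constant `C`:
there is a representation `a = Σ_{i ∈ ℤ} a_i`, `a_i ∈ X₀ ∩ X₁`, converging in
`X₀ + X₁`, such that for every finite `F ⊂ ℤ` and bounded `(ε_i) ⊂ ℂ`,
`‖Σ_{i∈F} ε_i 2^{i(j-Θ)} a_i‖_{X_j} ≤ C sup_i |ε_i|` for `j = 0, 1`. -/
def MemGP (N₀ N₁ : E → ℝ≥0∞) (Θ : ℝ) (C : ℝ≥0∞) (a : E) : Prop :=
  ∃ s : ℤ → E,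
    (∀ i, N₀ (s i) < ⊤ ∧ N₁ (s i) < ⊤) ∧
    Tendsto (fun k : ℕ =>
        sumQuasiNorm N₀ N₁ (a - ∑ i ∈ Finset.Icc (-(k : ℤ)) (k : ℤ), s i))
      atTop (nhds 0) ∧
    ∀ (F : Finset ℤ) (ε : ℤ → ℂ), (∃ M : ℝ, ∀ i, ‖ε i‖ ≤ M) →
      N₀ (gpSum Θ 0 ε s F) ≤ C * (⨆ i : ℤ, (‖ε i‖₊ : ℝ≥0∞)) ∧
      N₁ (gpSum Θ 1 ε s F) ≤ C * (⨆ i : ℤ, (‖ε i‖₊ : ℝ≥0∞))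

/-- The Gustavsson–Peetre quasi-norm: the infimum of admissible constants. -/
noncomputable def gpNorm (N₀ N₁ : E → ℝ≥0∞) (Θ : ℝ) (a : E) : ℝ≥0∞ :=
  sInf {C : ℝ≥0∞ | MemGP N₀ N₁ Θ C a}

end GustavssonPeetre

/-- interpolation property of the `±`-method of Gustavsson and
Peetre: a linear operator `T`, bounded from `A_j` to `B_j` with bound `K_j`
(`j = 0,1`) for quasi-Banach couples `(A₀,A₁)` and `(B₀,B₁)`, maps
`⟨A₀, A₁, Θ⟩` continuously into `⟨B₀, B₁, Θ⟩` with operator quasi-norm at most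
`max{K₀, K₁}`. -/
theorem gustavsson_peetre_interpolation
    {E F : Type*} [AddCommGroup E] [Module ℂ E] [AddCommGroup F] [Module ℂ F]
    (N₀ N₁ : E → ℝ≥0∞) (M₀ M₁ : F → ℝ≥0∞) (Θ : ℝ) (hΘ : Θ ∈ Set.Ioo (0 : ℝ) 1)
    -- the four quasi-norms are homogeneous and satisfy a quasi-triangle inequality
    (hN₀h : ∀ (c : ℂ) (x : E), N₀ (c • x) = (‖c‖₊ : ℝ≥0∞) * N₀ x)
    (hN₁h : ∀ (c : ℂ) (x : E), N₁ (c • x) = (‖c‖₊ : ℝ≥0∞) * N₁ x)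
    (hM₀h : ∀ (c : ℂ) (y : F), M₀ (c • y) = (‖c‖₊ : ℝ≥0∞) * M₀ y)
    (hM₁h : ∀ (c : ℂ) (y : F), M₁ (c • y) = (‖c‖₊ : ℝ≥0∞) * M₁ y)
    (hN₀t : ∃ K : ℝ≥0∞, 1 ≤ K ∧ ∀ x y : E, N₀ (x + y) ≤ K * (N₀ x + N₀ y))
    (hN₁t : ∃ K : ℝ≥0∞, 1 ≤ K ∧ ∀ x y : E, N₁ (x + y) ≤ K * (N₁ x + N₁ y))
    (hM₀t : ∃ K : ℝ≥0∞, 1 ≤ K ∧ ∀ x y : F, M₀ (x + y) ≤ K * (M₀ x + M₀ y))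
    (hM₁t : ∃ K : ℝ≥0∞, 1 ≤ K ∧ ∀ x y : F, M₁ (x + y) ≤ K * (M₁ x + M₁ y))
    (T : E →ₗ[ℂ] F) (K₀ K₁ : ℝ≥0∞) (hK₀ : K₀ < ⊤) (hK₁ : K₁ < ⊤)
    (hT₀ : ∀ x : E, M₀ (T x) ≤ K₀ * N₀ x)
    (hT₁ : ∀ x : E, M₁ (T x) ≤ K₁ * N₁ x) :
    ∀ a : E,
      (∀ C : ℝ≥0∞, MemGP N₀ N₁ Θ C a → MemGP M₀ M₁ Θ (max K₀ K₁ * C) (T a)) ∧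
      gpNorm M₀ M₁ Θ (T a) ≤ max K₀ K₁ * gpNorm N₀ N₁ Θ a := by

  intro a
  set K := max K₀ K₁ with hK
  have hKtop : K ≠ ⊤ := by
    simp [hK, hK₀.ne, hK₁.ne]
  have hK0le : K₀ ≤ K := le_max_left _ _
  have hK1le : K₁ ≤ K := le_max_right _ _
  -- T maps gpSum to gpSum
  have hgp : ∀ (j : ℕ) (ε : ℤ → ℂ) (s : ℤ → E) (Fs : Finset ℤ),
      T (gpSum Θ j ε s Fs) = gpSum Θ j ε (fun i => T (s i)) Fs := by
    intro j ε s Fs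
    simp [gpSum, map_sum, map_smul]
  -- sum quasi-norm comparison
  haveI : Nonempty E := ⟨0⟩
  have hsum : ∀ z : E,
      sumQuasiNorm M₀ M₁ (T z) ≤ K * sumQuasiNorm N₀ N₁ z := by
    intro z
    rw [sumQuasiNorm, sumQuasiNorm, ENNReal.mul_iInf (fun h => absurd h hKtop)]
    refine le_iInf fun x => ?_
    refine iInf_le_of_le (T x) ?_
    have h1 : M₀ (T x) ≤ K * N₀ x := (hT₀ x).trans (mul_le_mul_left hK0le _)
    have h2 : M₁ (T z - T x) ≤ K * N₁ (z - x) := by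
      rw [← map_sub]
      exact (hT₁ _).trans (mul_le_mul_left hK1le _)
    calc M₀ (T x) + M₁ (T z - T x) ≤ K * N₀ x + K * N₁ (z - x) := add_le_add h1 h2
      _ = K * (N₀ x + N₁ (z - x)) := (mul_add _ _ _).symm
  -- main membership statement
  have hmem : ∀ C : ℝ≥0∞, MemGP N₀ N₁ Θ C a → MemGP M₀ M₁ Θ (K * C) (T a) := by
    intro C ⟨s, hfin, htend, hbd⟩
    refine ⟨fun i => T (s i), fun i => ?_, ?_, ?_⟩
    · constructor
      · exact (hT₀ _).trans_lt (ENNReal.mul_lt_top hK₀ (hfin i).1)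
      · exact (hT₁ _).trans_lt (ENNReal.mul_lt_top hK₁ (hfin i).2)
    · have hle : ∀ k : ℕ,
          sumQuasiNorm M₀ M₁ (T a - ∑ i ∈ Finset.Icc (-(k : ℤ)) (k : ℤ), T (s i))
            ≤ K * sumQuasiNorm N₀ N₁ (a - ∑ i ∈ Finset.Icc (-(k : ℤ)) (k : ℤ), s i) := by
        intro k
        have : T a - ∑ i ∈ Finset.Icc (-(k : ℤ)) (k : ℤ), T (s i)
            = T (a - ∑ i ∈ Finset.Icc (-(k : ℤ)) (k : ℤ), s i) := by
          simp [map_sub, map_sum]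
        rw [this]
        exact hsum _
      have hKt : Tendsto (fun k : ℕ =>
          K * sumQuasiNorm N₀ N₁ (a - ∑ i ∈ Finset.Icc (-(k : ℤ)) (k : ℤ), s i))
          atTop (nhds 0) := by
        have := ENNReal.Tendsto.const_mul (a := K) htend (Or.inr hKtop)
        simpa using this
      exact tendsto_of_tendsto_of_tendsto_of_le_of_le tendsto_const_nhds hKt
        (fun k => zero_le) hle
    · intro Fs ε hε
      obtain ⟨h0, h1⟩ := hbd Fs ε hε
      constructor
      · rw [← hgp]
        calc M₀ (T (gpSum Θ 0 ε s Fs)) ≤ K₀ * N₀ (gpSum Θ 0 ε s Fs) := hT₀ _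
          _ ≤ K₀ * (C * (⨆ i : ℤ, (‖ε i‖₊ : ℝ≥0∞))) := mul_le_mul_right h0 _
          _ = K₀ * C * (⨆ i : ℤ, (‖ε i‖₊ : ℝ≥0∞)) := (mul_assoc _ _ _).symm
          _ ≤ K * C * (⨆ i : ℤ, (‖ε i‖₊ : ℝ≥0∞)) := by
              gcongr
      · rw [← hgp]
        calc M₁ (T (gpSum Θ 1 ε s Fs)) ≤ K₁ * N₁ (gpSum Θ 1 ε s Fs) := hT₁ _
          _ ≤ K₁ * (C * (⨆ i : ℤ, (‖ε i‖₊ : ℝ≥0∞))) := mul_le_mul_right h1 _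
          _ = K₁ * C * (⨆ i : ℤ, (‖ε i‖₊ : ℝ≥0∞)) := (mul_assoc _ _ _).symm
          _ ≤ K * C * (⨆ i : ℤ, (‖ε i‖₊ : ℝ≥0∞)) := by
              gcongr
  refine ⟨hmem, ?_⟩
  -- norm inequality
  have hM0 : M₀ (0 : F) = 0 := by
    have := hM₀h 0 0
    simpa using this
  have hM1 : M₁ (0 : F) = 0 := by
    have := hM₁h 0 0
    simpa using this
  by_cases hKz : K = 0
  · -- then K₀ = K₁ = 0 and T a has trivial membership with constant 0
    have hK₀z : K₀ = 0 := le_antisymm (hKz ▸ hK0le) (zero_le)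
    have hK₁z : K₁ = 0 := le_antisymm (hKz ▸ hK1le) (zero_le)
    have hmem0 : MemGP M₀ M₁ Θ 0 (T a) := by
      refine ⟨fun _ => 0, fun i => by simp [hM0, hM1], ?_, ?_⟩
      · have hTa0 : M₀ (T a) = 0 := by
          have := hT₀ a
          simpa [hK₀z] using this
        have : ∀ k : ℕ, sumQuasiNorm M₀ M₁
            (T a - ∑ i ∈ Finset.Icc (-(k : ℤ)) (k : ℤ), (0 : F)) = 0 := by
          intro k
          refine le_antisymm ?_ (zero_le)
          refine iInf_le_of_le (T a) ?_
          simp [hTa0, hM1]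
        simp only [this]
        exact tendsto_const_nhds
      · intro Fs ε hε
        simp [gpSum, hM0, hM1]
    have : gpNorm M₀ M₁ Θ (T a) ≤ 0 := sInf_le hmem0
    calc gpNorm M₀ M₁ Θ (T a) ≤ 0 := this
      _ ≤ K * gpNorm N₀ N₁ Θ a := zero_le
  · -- K ≠ 0
    rcases Set.eq_empty_or_nonempty {C : ℝ≥0∞ | MemGP N₀ N₁ Θ C a} with hS | hS
    · have : gpNorm N₀ N₁ Θ a = ⊤ := by rw [gpNorm, hS, sInf_empty]
      rw [this, ENNReal.mul_top hKz]
      exact le_top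
    · haveI : Nonempty {C : ℝ≥0∞ | MemGP N₀ N₁ Θ C a} := hS.to_subtype
      have heq : K * gpNorm N₀ N₁ Θ a
          = ⨅ C : {C : ℝ≥0∞ | MemGP N₀ N₁ Θ C a}, K * C.1 := by
        rw [gpNorm, sInf_eq_iInf', ENNReal.mul_iInf (fun h => absurd h hKtop)]
      rw [heq]
      exact le_iInf fun C => sInf_le (hmem C.1 C.2)
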